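/- Let k be an algebraically closed field of characteristic p > 5 and let a ∈ k with a ∉ {0, 1, −1}. Let K be the field of fractions of the integral domain k[X,Y]/(Y² − X(X²−1)(X²−a²)), with x, y the images of X, Y. Then every k-algebra automorphism φ of K with φ(x) = −x satisfies φ²(x) = x and φ²(y) = −y; in particular φ² ≠ id and φ has order exactly 4. -/

import Mathlib

open MvPolynomial

set_option synthInstance.maxHeartbeats 1000000
set_option maxHeartbeats 1000000
set_option maxHeartbeats 4000000

/-- The ideal `(Y² − X(X²−1)(X²−a²))` in `k[X,Y]`, where `X = X 0`, `Y = X 1`. -/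
noncomputable def curveIdeal2 (k : Type) [Field k] (a : k) :
    Ideal (MvPolynomial (Fin 2) k) :=
  Ideal.span {X 1 ^ 2 - X 0 * (X 0 ^ 2 - 1) * (X 0 ^ 2 - C a ^ 2)}

/-- The affine coordinate ring `R = k[X,Y]/(Y² − X(X²−1)(X²−a²))`. -/
abbrev CurveRing2 (k : Type) [Field k] (a : k) : Type :=
  MvPolynomial (Fin 2) k ⧸ curveIdeal2 k a

/-- The image of a polynomial `f ∈ k[X,Y]` in the fraction field of the coordinate ring. -/
noncomputable def emb2 (k : Type) [Field k] (a : k) (f : MvPolynomial (Fin 2) k) :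
    FractionRing (CurveRing2 k a) :=
  algebraMap (CurveRing2 k a) (FractionRing (CurveRing2 k a))
    (Ideal.Quotient.mk (curveIdeal2 k a) f)

/-- `Y` is not in the curve ideal: there is a point on the curve with nonzero `y`. -/
lemma X1_not_mem_curveIdeal2 (k : Type) [Field k] [IsAlgClosed k] (p : ℕ) [CharP k p]
    (hp : 5 < p) (a : k) :
    X 1 ∉ curveIdeal2 k a := by
  have hprime : p.Prime := (CharP.char_is_prime_or_zero k p).resolve_right (by omega)
  have hcast : ∀ n : ℕ, 0 < n → n < p → ((n : k) ≠ 0) := by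
    intro n hn hnp h0
    have := (CharP.cast_eq_zero_iff k p n).mp h0
    exact absurd (Nat.le_of_dvd hn this) (by omega)
  -- choose x0 ∈ {2, 3} with x0 ≠ 0, x0² ≠ 1, x0² ≠ a²
  obtain ⟨x0, hx0, hx1, hxa⟩ :
      ∃ x0 : k, x0 ≠ 0 ∧ x0 ^ 2 - 1 ≠ 0 ∧ x0 ^ 2 - a ^ 2 ≠ 0 := by
    by_cases h4 : a ^ 2 = 4
    · refine ⟨3, ?_, ?_, ?_⟩
      · have := hcast 3 (by norm_num) (by omega); exact_mod_cast this
      · have h8 : ((8 : ℕ) : k) ≠ 0 := by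
          intro h0
          have hdvd := (CharP.cast_eq_zero_iff k p 8).mp h0
          have : p ∣ 2 := hprime.dvd_of_dvd_pow (n := 3) (by norm_num at hdvd ⊢; exact hdvd)
          exact absurd (Nat.le_of_dvd (by norm_num) this) (by omega)
        intro h; apply h8
        push_cast
        linear_combination h
      · have h5 : ((5 : ℕ) : k) ≠ 0 := hcast 5 (by norm_num) (by omega)
        intro h; apply h5
        push_cast
        linear_combination h + h4
    · refine ⟨2, ?_, ?_, ?_⟩
      · have := hcast 2 (by norm_num) (by omega); exact_mod_cast this
      · have h3 : ((3 : ℕ) : k) ≠ 0 := hcast 3 (by norm_num) (by omega)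
        intro h; apply h3
        push_cast
        linear_combination h
      · intro h; apply h4; linear_combination -h
  obtain ⟨y0, hy0⟩ := IsAlgClosed.exists_pow_nat_eq (x0 * (x0 ^ 2 - 1) * (x0 ^ 2 - a ^ 2))
    (n := 2) (by norm_num)
  have hy0ne : y0 ≠ 0 := by
    intro h; rw [h] at hy0
    apply mul_ne_zero (mul_ne_zero hx0 hx1) hxa
    rw [← hy0]; ring
  intro hmem
  rw [curveIdeal2, Ideal.mem_span_singleton] at hmem
  obtain ⟨q, hq⟩ := hmem
  have := congrArg (MvPolynomial.eval ![x0, y0]) hq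
  simp [MvPolynomial.eval_mul, hy0] at this
  exact hy0ne (by linear_combination this)

theorem stmt2 (k : Type) [Field k] [IsAlgClosed k] (p : ℕ) [CharP k p] (hp : 5 < p)
    (a : k) (ha0 : a ≠ 0) (ha1 : a ≠ 1) (han1 : a ≠ -1)
    (hdom : IsDomain (CurveRing2 k a))
    (φ : FractionRing (CurveRing2 k a) ≃+* FractionRing (CurveRing2 k a))
    (hfix : ∀ c : k, φ (emb2 k a (C c)) = emb2 k a (C c))
    (hx : φ (emb2 k a (X 0)) = - emb2 k a (X 0)) :
    (φ.trans φ) (emb2 k a (X 0)) = emb2 k a (X 0) ∧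
    (φ.trans φ) (emb2 k a (X 1)) = - emb2 k a (X 1) ∧
    φ.trans φ ≠ RingEquiv.refl _ ∧
    ((φ.trans φ).trans φ).trans φ = RingEquiv.refl _ := by
  haveI := hdom
  set R := CurveRing2 k a
  set K := FractionRing R
  -- the embedding as a ring hom
  set E : MvPolynomial (Fin 2) k →+* K :=
    (algebraMap R K).comp (Ideal.Quotient.mk (curveIdeal2 k a)) with hE
  have hEemb : ∀ f, emb2 k a f = E f := fun f => rfl
  set x : K := E (X 0) with hxdef
  set y : K := E (X 1) with hydef
  set ca : K := E (C a) with hcadef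
  simp only [hEemb] at hx
  -- the curve relation
  have hrel : y ^ 2 = x * (x ^ 2 - 1) * (x ^ 2 - ca ^ 2) := by
    have hmk : (Ideal.Quotient.mk (curveIdeal2 k a))
        (X 1 ^ 2 - X 0 * (X 0 ^ 2 - 1) * (X 0 ^ 2 - C a ^ 2)) = 0 :=
      Ideal.Quotient.eq_zero_iff_mem.mpr
        (by rw [curveIdeal2]; exact Ideal.subset_span rfl)
    have h0 : E (X 1 ^ 2 - X 0 * (X 0 ^ 2 - 1) * (X 0 ^ 2 - C a ^ 2)) = 0 := by
      rw [hE, RingHom.comp_apply, hmk, map_zero]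
    simp only [map_sub, map_mul, map_pow, map_one, sub_eq_zero] at h0
    exact h0
  -- y ≠ 0
  have hyne : y ≠ 0 := by
    intro h0
    have hinj : Function.Injective (algebraMap R K) := IsFractionRing.injective R K
    have : Ideal.Quotient.mk (curveIdeal2 k a) (X 1) = 0 := by
      apply hinj
      rw [map_zero]; exact h0
    exact X1_not_mem_curveIdeal2 k p hp a (Ideal.Quotient.eq_zero_iff_mem.mp this)
  -- 2 ≠ 0 in K
  have h2K : (2 : K) ≠ 0 := by
    have h2k : (2 : k) ≠ 0 := by
      intro h0
      have h0' : ((2 : ℕ) : k) = 0 := by push_cast; exact h0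
      have := (CharP.cast_eq_zero_iff k p 2).mp h0'
      exact absurd (Nat.le_of_dvd (by norm_num) this) (by omega)
    have hinjk : Function.Injective (E.comp (MvPolynomial.C (σ := Fin 2) (R := k))) :=
      RingHom.injective _
    intro h0
    apply h2k
    apply hinjk
    rw [map_ofNat, map_zero, h0]
  -- φ(y)² = -y²
  have hphiy2 : φ y ^ 2 = - y ^ 2 := by
    have hca : φ ca = ca := hfix a
    calc φ y ^ 2 = φ (y ^ 2) := (map_pow φ y 2).symm
    _ = φ (x * (x ^ 2 - 1) * (x ^ 2 - ca ^ 2)) := by rw [hrel]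
    _ = φ x * (φ x ^ 2 - 1) * (φ x ^ 2 - φ ca ^ 2) := by
        simp only [map_mul, map_sub, map_pow, map_one]
    _ = - (x * (x ^ 2 - 1) * (x ^ 2 - ca ^ 2)) := by rw [hx, hca]; ring
    _ = - y ^ 2 := by rw [hrel]
  -- get i with i² = -1
  obtain ⟨i, hi⟩ := IsAlgClosed.exists_pow_nat_eq (-1 : k) (n := 2) (by norm_num)
  set ci : K := E (C i) with hcidef
  have hci2 : ci ^ 2 = -1 := by
    rw [hcidef, ← map_pow, ← map_pow, hi, map_neg, map_one, map_neg, map_one]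
  have hciφ : φ ci = ci := by rw [hcidef, ← hEemb]; exact hfix i
  -- φ(y) = ±ci·y
  have hfact : (φ y - ci * y) * (φ y + ci * y) = 0 := by
    have : φ y ^ 2 - ci ^ 2 * y ^ 2 = 0 := by rw [hphiy2, hci2]; ring
    linear_combination this
  have hφy : φ y = ci * y ∨ φ y = -(ci * y) := by
    rcases mul_eq_zero.mp hfact with h | h
    · left; exact sub_eq_zero.mp h
    · right; linear_combination h
  -- φ²(y) = -y
  have h2y : φ (φ y) = - y := by
    rcases hφy with h | h
    · rw [h, map_mul, hciφ, h, ← mul_assoc, ← pow_two, hci2]; ring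
    · rw [h, map_neg, map_mul, hciφ, h]
      rw [mul_neg, neg_neg, ← mul_assoc, ← pow_two, hci2]; ring
  have h2x : φ (φ x) = x := by rw [hx, map_neg, hx, neg_neg]
  refine ⟨?_, ?_, ?_, ?_⟩
  · simpa [RingEquiv.trans_apply, hEemb] using h2x
  · simpa [RingEquiv.trans_apply, hEemb] using h2y
  · intro h
    have := congrArg (fun e : K ≃+* K => e y) h
    simp only [RingEquiv.trans_apply, RingEquiv.refl_apply] at this
    rw [h2y] at this
    have h2y0 : (2 : K) * y = 0 := by change -y = y at this; linear_combination -this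
    rcases mul_eq_zero.mp h2y0 with h | h
    · exact h2K h
    · exact hyne h
  · set Φ := ((φ.trans φ).trans φ).trans φ with hΦ
    have hfix' : ∀ c : k, φ (E (C c)) = E (C c) := by
      intro c; have := hfix c; rwa [hEemb] at this
    have h4x : Φ x = x := by
      simp only [hΦ, RingEquiv.trans_apply]
      rw [h2x, h2x]
    have h4y : Φ y = y := by
      simp only [hΦ, RingEquiv.trans_apply]
      rw [h2y, map_neg, map_neg, h2y, neg_neg]
    have hcomp : (Φ : K →+* K).comp E = E := by
      apply MvPolynomial.ringHom_ext
      · intro c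
        simp only [RingHom.comp_apply, RingEquiv.coe_toRingHom, hΦ,
          RingEquiv.trans_apply, hfix']
      · intro i
        fin_cases i
        · simpa [RingHom.comp_apply, ← hxdef] using h4x
        · simpa [RingHom.comp_apply, ← hydef] using h4y
    have hhom : (Φ : K →+* K) = RingHom.id K := by
      apply IsLocalization.ringHom_ext (nonZeroDivisors R)
      apply RingHom.ext
      intro r
      obtain ⟨f, rfl⟩ := Ideal.Quotient.mk_surjective (I := curveIdeal2 k a) r
      have := RingHom.congr_fun hcomp f
      simpa [hE] using this
    apply RingEquiv.ext
    intro z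
    have := RingHom.congr_fun hhom z
    simpa using this
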